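/- Superlevel-set characterization: if 0 < C_th < ln(1 + 2·SNR₀/(d₀² + L²/4)), then β L² − β² L² d₀² + 1 > 0, Q + Θ > 0, and the set of all times t ∈ ℝ at which the instantaneous capacity meets the threshold is exactly the closed interval { t ∈ ℝ : ln f(t, L) ≥ C_th } = [(L − Φ)/(2v), (L + Φ)/(2v)]. -/

import Mathlib

set_option maxHeartbeats 800000 in
lemma quad_iff' (β d₀ L s u : ℝ) (hβ : 0 < β) (hd₀ : 0 < d₀) (hL : 0 < L)
    (hc : β * (d₀^2 + L^2/4) < 2) (hs0 : 0 ≤ s)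
    (hs2 : s^2 = β*L^2 - β^2*L^2*d₀^2 + 1) :
    β * ((d₀^2 + (L/2 + u)^2) * (d₀^2 + (L/2 - u)^2))
      ≤ (d₀^2 + (L/2 + u)^2) + (d₀^2 + (L/2 - u)^2)
    ↔ 4*β*u^2 ≤ β*L^2 - 4*β*d₀^2 + 4*s + 4 := by
  have hw₀ : 0 < d₀^2 + L^2/4 := by positivity
  have hE₀sq : (2*β*(d₀^2+L^2/4) - 2 - β*L^2)^2 < (2*s)^2 := by
    nlinarith [mul_pos (mul_pos hβ hw₀) (show (0:ℝ) < 2 - β*(d₀^2+L^2/4) from by linarith)]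
  have hE₀gt : -(2*s) < 2*β*(d₀^2+L^2/4) - 2 - β*L^2 :=
    (abs_lt_of_sq_lt_sq' hE₀sq (by linarith)).1
  constructor
  · intro h
    have key : (2*β*(d₀^2+L^2/4+u^2) - 2 - β*L^2)^2 ≤ (2*s)^2 := by
      nlinarith [mul_nonneg hβ.le (sub_nonneg.2 h)]
    have hE := (abs_le_of_sq_le_sq' key (by linarith)).2
    nlinarith [hE]
  · intro h
    have hE2 : 2*β*(d₀^2+L^2/4+u^2) - 2 - β*L^2 ≤ 2*s := by nlinarith
    have hEgt : -(2*s) < 2*β*(d₀^2+L^2/4+u^2) - 2 - β*L^2 := by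
      nlinarith [hE₀gt, mul_nonneg hβ.le (sq_nonneg u)]
    nlinarith [mul_nonneg (by linarith : (0:ℝ) ≤ 2*s - (2*β*(d₀^2+L^2/4+u^2) - 2 - β*L^2))
      (by linarith : (0:ℝ) ≤ 2*s + (2*β*(d₀^2+L^2/4+u^2) - 2 - β*L^2)), hβ, hs2]

lemma exp_le_iff' (SNR₀ A B C e : ℝ) (hS : 0 < SNR₀) (hA : 0 < A) (hB : 0 < B)
    (he : e - 1 = C * SNR₀) :
    e ≤ 1 + SNR₀/A + SNR₀/B ↔ C*(A*B) ≤ A + B := by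
  have h1 : SNR₀/A + SNR₀/B = SNR₀*(A+B)/(A*B) := by field_simp; ring
  rw [add_assoc, h1, show e = 1 + C*SNR₀ from by linarith, add_le_add_iff_left,
    le_div_iff₀ (mul_pos hA hB)]
  constructor
  · intro h; nlinarith [h, hS]
  · intro h; nlinarith [h, hS]


set_option maxHeartbeats 1600000 in
/-- Superlevel-set characterization for the two-antenna instantaneous capacity.
With `f t L = 1 + SNR₀/(d₀² + (v t)²) + SNR₀/(d₀² + (L − v t)²)`,
`β = (e^{C_th} − 1)/SNR₀`, `Q = β(L² − 4 d₀²)`,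
`Θ = 4·√(β L² − β² L² d₀² + 1) + 4` and `Φ = √((Q + Θ)/β)`: if
`0 < C_th < ln(1 + 2·SNR₀/(d₀² + L²/4))`, then the inner radicand is positive,
`Q + Θ > 0`, and `{t | ln f(t, L) ≥ C_th} = [(L − Φ)/(2v), (L + Φ)/(2v)]`. -/
theorem two_antenna_superlevel_set
    (SNR₀ d₀ v L : ℝ) (hSNR : 0 < SNR₀) (hd₀ : 0 < d₀) (hv : 0 < v) (hL : 0 < L)
    (f : ℝ → ℝ → ℝ)
    (hf : ∀ t L', f t L' =
      1 + SNR₀ / (d₀ ^ 2 + (v * t) ^ 2) + SNR₀ / (d₀ ^ 2 + (L' - v * t) ^ 2))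
    (Cth β Q Θ Φ : ℝ)
    (hCth₀ : 0 < Cth)
    (hCth₁ : Cth < Real.log (1 + 2 * SNR₀ / (d₀ ^ 2 + L ^ 2 / 4)))
    (hβ : β = (Real.exp Cth - 1) / SNR₀)
    (hQ : Q = β * (L ^ 2 - 4 * d₀ ^ 2))
    (hΘ : Θ = 4 * Real.sqrt (β * L ^ 2 - β ^ 2 * L ^ 2 * d₀ ^ 2 + 1) + 4)
    (hΦ : Φ = Real.sqrt ((Q + Θ) / β)) :
    0 < β * L ^ 2 - β ^ 2 * L ^ 2 * d₀ ^ 2 + 1 ∧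
    0 < Q + Θ ∧
    {t : ℝ | Cth ≤ Real.log (f t L)} =
      Set.Icc ((L - Φ) / (2 * v)) ((L + Φ) / (2 * v)) := by
  have hexp1 : 1 < Real.exp Cth := by
    have := Real.exp_lt_exp.mpr hCth₀; simpa using this
  have hβpos : 0 < β := by rw [hβ]; exact div_pos (by linarith) hSNR
  have hw₀ : 0 < d₀^2 + L^2/4 := by positivity
  have hy : (0:ℝ) < 1 + 2 * SNR₀ / (d₀ ^ 2 + L ^ 2 / 4) := by positivity
  have hexp2 : Real.exp Cth < 1 + 2 * SNR₀ / (d₀ ^ 2 + L ^ 2 / 4) := by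
    calc Real.exp Cth < Real.exp (Real.log (1 + 2 * SNR₀ / (d₀ ^ 2 + L ^ 2 / 4))) :=
          Real.exp_lt_exp.mpr hCth₁
      _ = _ := Real.exp_log hy
  have hce : Real.exp Cth - 1 = β * SNR₀ := by rw [hβ]; field_simp
  have hc : β * (d₀^2 + L^2/4) < 2 := by
    have h3 : (Real.exp Cth - 1) * (d₀^2 + L^2/4) < 2 * SNR₀ := by
      have h2 : Real.exp Cth - 1 < 2 * SNR₀ / (d₀ ^ 2 + L ^ 2 / 4) := by linarith
      exact (lt_div_iff₀ hw₀).mp h2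
    nlinarith [h3, hce, hSNR]
  have hD : 0 < β * L ^ 2 - β ^ 2 * L ^ 2 * d₀ ^ 2 + 1 := by
    nlinarith [mul_pos (mul_pos hβpos (pow_pos hL 2))
      (show (0:ℝ) < 2 - β*(d₀^2+L^2/4) from by linarith), sq_nonneg (β*L^2/2 - 1)]
  set s := Real.sqrt (β * L ^ 2 - β ^ 2 * L ^ 2 * d₀ ^ 2 + 1) with hsdef
  have hs0 : 0 ≤ s := Real.sqrt_nonneg _
  have hs2 : s^2 = β*L^2 - β^2*L^2*d₀^2 + 1 := Real.sq_sqrt hD.le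
  have hE₀sq : (2*β*(d₀^2+L^2/4) - 2 - β*L^2)^2 < (2*s)^2 := by
    nlinarith [mul_pos (mul_pos hβpos hw₀)
      (show (0:ℝ) < 2 - β*(d₀^2+L^2/4) from by linarith), hs2]
  have hE₀lt := (abs_lt_of_sq_lt_sq' hE₀sq (by linarith)).2
  have hQΘpos : 0 < Q + Θ := by rw [hQ, hΘ]; nlinarith [hE₀lt]
  refine ⟨hD, hQΘpos, ?_⟩
  have hΦ0 : 0 ≤ Φ := hΦ ▸ Real.sqrt_nonneg _
  have hβΦ : β * Φ^2 = Q + Θ := by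
    rw [hΦ, Real.sq_sqrt (by positivity : (0:ℝ) ≤ (Q+Θ)/β)]
    field_simp
  have h2v : (0:ℝ) < 2*v := by positivity
  ext t
  simp only [Set.mem_setOf_eq, Set.mem_Icc]
  have hA : (0:ℝ) < d₀ ^ 2 + (v * t) ^ 2 := by positivity
  have hB : (0:ℝ) < d₀ ^ 2 + (L - v * t) ^ 2 := by positivity
  have hfpos : 0 < f t L := by rw [hf]; positivity
  rw [Real.le_log_iff_exp_le hfpos, hf,
    exp_le_iff' SNR₀ _ _ β (Real.exp Cth) hSNR hA hB hce,
    show d₀ ^ 2 + (v * t) ^ 2 = d₀^2 + (L/2 + (v*t - L/2))^2 from by ring,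
    show d₀ ^ 2 + (L - v * t) ^ 2 = d₀^2 + (L/2 - (v*t - L/2))^2 from by ring,
    quad_iff' β d₀ L s (v*t - L/2) hβpos hd₀ hL hc hs0 hs2,
    show β*L^2 - 4*β*d₀^2 + 4*s + 4 = β*Φ^2 from by rw [hβΦ, hQ, hΘ]; ring,
    show 4*β*(v*t - L/2)^2 = β*(2*v*t - L)^2 from by ring,
    mul_le_mul_iff_right₀ hβpos]
  constructor
  · intro h
    have h2 := abs_le_of_sq_le_sq' h hΦ0
    constructor
    · rw [div_le_iff₀ h2v]; linarith [h2.1]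
    · rw [le_div_iff₀ h2v]; linarith [h2.2]
  · rintro ⟨h1, h2⟩
    rw [div_le_iff₀ h2v] at h1
    rw [le_div_iff₀ h2v] at h2
    exact sq_le_sq' (by linarith) (by linarith)
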